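/- Let N ≥ 4, let W be a Weyl tensor on ℝ^N, let (k, n, m_2, …, m_{N−1}) be a null frame with first vector k, write ⟨k,x⟩ := η(k,x) and B(x,y) := W(x,k,k,y). Then the following necessary conditions hold: (a) if W has boost order ≤ 1 with respect to the frame, then ⟨k,u⟩⟨k,v⟩B(x,y) − ⟨k,u⟩⟨k,y⟩B(x,v) − ⟨k,x⟩⟨k,v⟩B(u,y) + ⟨k,x⟩⟨k,y⟩B(u,v) = 0 for all u,x,y,v; (b) if boost order ≤ 0, then B(x,y)⟨k,v⟩ − B(x,v)⟨k,y⟩ = 0 for all x,y,v; (c) if boost order ≤ −1, then W(x,y,k,w)⟨k,v⟩ − W(x,y,k,v)⟨k,w⟩ = 0 for all x,y,w,v; (d) if boost order ≤ −2, then W(x,y,k,w) = 0 for all x,y,w. -/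

import Mathlib

/-- The Minkowski symmetric bilinear form of signature `(-,+,…,+)` on `ℝ^N`. -/
def eta {N : ℕ} (x y : Fin N → ℝ) : ℝ :=
  ∑ a : Fin N, (if (a : ℕ) = 0 then -(x a * y a) else x a * y a)

/-- A null frame `(ℓ, n, m_2, …, m_{N-1})` of `ℝ^N`: a basis consisting of two null
vectors `ℓ = f 0`, `n = f 1` with `η(ℓ,n) = 1` and spacelike vectors `m_i = f i`
(`2 ≤ i`) orthonormal and orthogonal to `ℓ` and `n`. -/
def IsNullFrame {N : ℕ} [NeZero N] (f : Fin N → Fin N → ℝ) : Prop :=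
  LinearIndependent ℝ f ∧
  eta (f 0) (f 0) = 0 ∧ eta (f 1) (f 1) = 0 ∧ eta (f 0) (f 1) = 1 ∧
  (∀ i j : Fin N, 2 ≤ (i : ℕ) → 2 ≤ (j : ℕ) →
      eta (f i) (f j) = if i = j then 1 else 0) ∧
  (∀ i : Fin N, 2 ≤ (i : ℕ) → eta (f 0) (f i) = 0 ∧ eta (f 1) (f i) = 0)

/-- A Weyl tensor on `ℝ^N`: a 4-linear form with the pair symmetries
`W(x,y,z,w) = -W(y,x,z,w) = W(z,w,x,y)`, the first Bianchi identity, and all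
`η`-traces zero (the standard basis being `η`-orthonormal, the `η`-trace of
`(u,v) ↦ W(u,x,v,y)` is `∑ₐ η^{aa} W(eₐ,x,eₐ,y)` with `η^{00} = -1`, `η^{aa} = 1`). -/
def IsWeyl {N : ℕ} (W : MultilinearMap ℝ (fun _ : Fin 4 => (Fin N → ℝ)) ℝ) : Prop :=
  (∀ x y z w : Fin N → ℝ, W ![y, x, z, w] = - W ![x, y, z, w]) ∧
  (∀ x y z w : Fin N → ℝ, W ![z, w, x, y] = W ![x, y, z, w]) ∧
  (∀ x y z w : Fin N → ℝ,
    W ![x, y, z, w] + W ![x, z, w, y] + W ![x, w, y, z] = 0) ∧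
  (∀ x y : Fin N → ℝ,
    ∑ a : Fin N, (if (a : ℕ) = 0 then (-1 : ℝ) else 1) *
      W ![Pi.single a 1, x, Pi.single a 1, y] = 0)

/-- Boost weight of a frame index: `b_0 = 1`, `b_1 = -1`, `b_i = 0` for spatial `i`. -/
def bw {N : ℕ} (A : Fin N) : ℤ :=
  if (A : ℕ) = 0 then 1 else if (A : ℕ) = 1 then -1 else 0

section auxStmt14

lemma eta_eq' {N : ℕ} (x y : Fin N → ℝ) :
    eta x y = ∑ a : Fin N, (if (a : ℕ) = 0 then (-1:ℝ) else 1) * x a * y a := by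
  unfold eta; apply Finset.sum_congr rfl; intro a _; split <;> ring

lemma eta_sum_smul' {N : ℕ} (v : Fin N → ℝ) (c : Fin N → ℝ) (u : Fin N → Fin N → ℝ) :
    eta v (∑ j, c j • u j) = ∑ j, c j * eta v (u j) := by
  simp only [eta_eq']
  rw [show (∑ j, c j * ∑ a : Fin N, (if (a:ℕ)=0 then (-1:ℝ) else 1) * v a * u j a)
      = ∑ j, ∑ a : Fin N, c j * ((if (a:ℕ)=0 then (-1:ℝ) else 1) * v a * u j a) by
        exact Finset.sum_congr rfl fun j _ => Finset.mul_sum _ _ _]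
  rw [Finset.sum_comm]
  apply Finset.sum_congr rfl; intro a _
  simp only [Finset.sum_apply, Pi.smul_apply, smul_eq_mul, Finset.mul_sum]
  apply Finset.sum_congr rfl; intro j _; ring

end auxStmt14

/-- Necessary conditions for alignment of the null vector `k = f 0`
(the first vector of a null frame), with `⟨k,x⟩ = η(k,x)` and `B(x,y) = W(x,k,k,y)`:
(a) boost order `≤ 1` (type **I**) implies the quartic alignment identity;
(b) boost order `≤ 0` (type **II**) implies `B(x,y)⟨k,v⟩ - B(x,v)⟨k,y⟩ = 0`;
(c) boost order `≤ -1` (type **III**) implies `W(x,y,k,w)⟨k,v⟩ - W(x,y,k,v)⟨k,w⟩ = 0`;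
(d) boost order `≤ -2` (type **N**) implies `W(x,y,k,w) = 0`. -/
theorem stmt_14 (N : ℕ) [NeZero N] (hN : 4 ≤ N)
    (W : MultilinearMap ℝ (fun _ : Fin 4 => (Fin N → ℝ)) ℝ) (hW : IsWeyl W)
    (f : Fin N → Fin N → ℝ) (hf : IsNullFrame f) :
    ((∀ A : Fin 4 → Fin N, (1 : ℤ) < ∑ k, bw (A k) → W (fun k => f (A k)) = 0) →
      ∀ u x y v : Fin N → ℝ,
        eta (f 0) u * eta (f 0) v * W ![x, f 0, f 0, y]
          - eta (f 0) u * eta (f 0) y * W ![x, f 0, f 0, v]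
          - eta (f 0) x * eta (f 0) v * W ![u, f 0, f 0, y]
          + eta (f 0) x * eta (f 0) y * W ![u, f 0, f 0, v] = 0) ∧
    ((∀ A : Fin 4 → Fin N, (0 : ℤ) < ∑ k, bw (A k) → W (fun k => f (A k)) = 0) →
      ∀ x y v : Fin N → ℝ,
        W ![x, f 0, f 0, y] * eta (f 0) v - W ![x, f 0, f 0, v] * eta (f 0) y = 0) ∧
    ((∀ A : Fin 4 → Fin N, (-1 : ℤ) < ∑ k, bw (A k) → W (fun k => f (A k)) = 0) →
      ∀ x y w v : Fin N → ℝ,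
        W ![x, y, f 0, w] * eta (f 0) v - W ![x, y, f 0, v] * eta (f 0) w = 0) ∧
    ((∀ A : Fin 4 → Fin N, (-2 : ℤ) < ∑ k, bw (A k) → W (fun k => f (A k)) = 0) →
      ∀ x y w : Fin N → ℝ, W ![x, y, f 0, w] = 0) := by
  obtain ⟨hli, h00, h11, h01, hij, h0i⟩ := hf
  obtain ⟨hWa, hWp, hWb, hWt⟩ := hW
  have hv1 : ((1 : Fin N) : ℕ) = 1 := by rw [Fin.val_one']; exact Nat.mod_eq_of_lt (by omega)
  have hcard : Fintype.card (Fin N) = Module.finrank ℝ (Fin N → ℝ) := by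
    simp [Module.finrank_fin_fun]
  set b : Module.Basis (Fin N) ℝ (Fin N → ℝ) := basisOfLinearIndependentOfCardEqFinrank hli hcard with hbdef
  have hb : ⇑b = f := coe_basisOfLinearIndependentOfCardEqFinrank hli hcard
  have hrepr : ∀ x : Fin N → ℝ, x = ∑ j, b.repr x j • f j := by
    intro x; rw [← hb]; exact (b.sum_repr x).symm
  have hreprf : ∀ A B : Fin N, b.repr (f A) B = if A = B then 1 else 0 := by
    intro A B; rw [← hb, b.repr_self]; exact Finsupp.single_apply
  have hetaf : ∀ A : Fin N, eta (f 0) (f A) = if A = 1 then 1 else 0 := by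
    intro A
    by_cases hA : A = 1
    · rw [if_pos hA, hA]; exact h01
    · rw [if_neg hA]
      have hAv : (A : ℕ) ≠ 1 := fun hh => hA (Fin.val_injective (by omega))
      rcases Nat.lt_or_ge (A : ℕ) 2 with h | h
      · have hA0 : A = 0 := Fin.val_injective (by simp only [Fin.val_zero]; omega)
        rw [hA0]; exact h00
      · exact (h0i A h).1
  have heta : ∀ x : Fin N → ℝ, eta (f 0) x = b.repr x 1 := by
    intro x
    conv_lhs => rw [hrepr x]
    rw [eta_sum_smul']
    simp only [hetaf, mul_ite, mul_one, mul_zero]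
    simp
  have hexp : ∀ x : Fin 4 → (Fin N → ℝ),
      W x = ∑ r : Fin 4 → Fin N, (∏ i, b.repr (x i) (r i)) * W (fun i => f (r i)) := by
    intro x
    have hx : x = fun i => ∑ j, b.repr (x i) j • f j := by funext i; exact hrepr (x i)
    conv_lhs => rw [hx]
    rw [W.map_sum]
    apply Finset.sum_congr rfl
    intro r _
    rw [W.map_smul_univ, smul_eq_mul]
  have hexp4 : ∀ x0 x1 x2 x3 : Fin N → ℝ, W ![x0, x1, x2, x3] =
      ∑ r : Fin 4 → Fin N,
        (b.repr x0 (r 0) * b.repr x1 (r 1) * b.repr x2 (r 2) * b.repr x3 (r 3)) *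
          W (fun i => f (r i)) := by
    intro x0 x1 x2 x3
    rw [hexp ![x0, x1, x2, x3]]
    apply Finset.sum_congr rfl; intro r _
    congr 1
    rw [Fin.prod_univ_four]
    simp [Matrix.cons_val_zero, Matrix.cons_val_one, Matrix.head_cons]
  have halt : ∀ r : Fin 4 → Fin N, r 0 = r 1 → W (fun k => f (r k)) = 0 := by
    intro r h
    have e : (fun k => f (r k)) = ![f (r 0), f (r 1), f (r 2), f (r 3)] := by
      funext i; fin_cases i <;> rfl
    have := hWa (f (r 0)) (f (r 1)) (f (r 2)) (f (r 3))
    rw [e, h]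
    rw [h] at this
    linarith
  have hbwge : ∀ A : Fin N, (-1 : ℤ) ≤ bw A := by
    intro A; unfold bw; split_ifs <;> omega
  have hbwnn : ∀ A : Fin N, A ≠ 1 → (0 : ℤ) ≤ bw A := by
    intro A hA; unfold bw; split_ifs with hh1 hh2
    · omega
    · exact absurd (Fin.val_injective (by omega)) hA
    · omega
  have hbw0 : bw (0 : Fin N) = 1 := by simp [bw]
  have hsum : ∀ r : Fin 4 → Fin N,
      ∑ k, bw (r k) = bw (r 0) + bw (r 1) + bw (r 2) + bw (r 3) :=
    fun r => Fin.sum_univ_four _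
  -- Key component-vanishing lemmas
  have keyA : (∀ A : Fin 4 → Fin N, (1 : ℤ) < ∑ k, bw (A k) → W (fun k => f (A k)) = 0) →
      ∀ r : Fin 4 → Fin N, r 1 = 0 → r 2 = 0 → r 0 ≠ 1 → r 3 ≠ 1 →
        W (fun k => f (r k)) = 0 := by
    intro h r h1 h2 h0 h3
    apply h
    rw [hsum r, h1, h2, hbw0]
    have := hbwnn _ h0; have := hbwnn _ h3
    omega
  have keyB : (∀ A : Fin 4 → Fin N, (0 : ℤ) < ∑ k, bw (A k) → W (fun k => f (A k)) = 0) →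
      ∀ r : Fin 4 → Fin N, r 1 = 0 → r 2 = 0 → ¬(r 0 = 1 ∧ r 3 = 1) →
        W (fun k => f (r k)) = 0 := by
    intro h r h1 h2 hn
    apply h
    rw [hsum r, h1, h2, hbw0]
    have g0 := hbwge (r 0); have g3 := hbwge (r 3)
    by_cases h0 : r 0 = 1
    · have h3 : r 3 ≠ 1 := fun hh => hn ⟨h0, hh⟩
      have := hbwnn _ h3; omega
    · have := hbwnn _ h0; omega
  have keyC : (∀ A : Fin 4 → Fin N, (-1 : ℤ) < ∑ k, bw (A k) → W (fun k => f (A k)) = 0) →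
      ∀ r : Fin 4 → Fin N, r 2 = 0 → r 3 ≠ 1 → W (fun k => f (r k)) = 0 := by
    intro h r h2 h3
    by_cases h0 : r 0 = 1
    · by_cases h1 : r 1 = 1
      · exact halt r (by rw [h0, h1])
      · apply h
        rw [hsum r, h2, hbw0]
        have := hbwge (r 0); have := hbwnn _ h1; have := hbwnn _ h3; omega
    · apply h
      rw [hsum r, h2, hbw0]
      have := hbwge (r 1); have := hbwnn _ h0; have := hbwnn _ h3; omega
  have keyD : (∀ A : Fin 4 → Fin N, (-2 : ℤ) < ∑ k, bw (A k) → W (fun k => f (A k)) = 0) →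
      ∀ r : Fin 4 → Fin N, r 2 = 0 → W (fun k => f (r k)) = 0 := by
    intro h r h2
    by_cases h0 : r 0 = 1
    · by_cases h1 : r 1 = 1
      · exact halt r (by rw [h0, h1])
      · apply h
        rw [hsum r, h2, hbw0]
        have := hbwge (r 0); have := hbwge (r 3); have := hbwnn _ h1; omega
    · apply h
      rw [hsum r, h2, hbw0]
      have := hbwge (r 1); have := hbwge (r 3); have := hbwnn _ h0; omega
  -- Structure lemmas
  have hmain : (∀ r : Fin 4 → Fin N, r 1 = 0 → r 2 = 0 → r 0 ≠ 1 → r 3 ≠ 1 →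
        W (fun k => f (r k)) = 0) →
      ∀ x y : Fin N → ℝ, W ![x, f 0, f 0, y] =
        eta (f 0) x * W ![f 1, f 0, f 0, y] + eta (f 0) y * W ![x, f 0, f 0, f 1]
          - eta (f 0) x * eta (f 0) y * W ![f 1, f 0, f 0, f 1] := by
    intro hkey x y
    rw [heta x, heta y, hexp4 x (f 0) (f 0) y, hexp4 (f 1) (f 0) (f 0) y,
        hexp4 x (f 0) (f 0) (f 1), hexp4 (f 1) (f 0) (f 0) (f 1),
        Finset.mul_sum, Finset.mul_sum, Finset.mul_sum,
        ← Finset.sum_add_distrib, ← Finset.sum_sub_distrib]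
    apply Finset.sum_congr rfl
    intro r _
    rw [hreprf 0 (r 1), hreprf 0 (r 2), hreprf 1 (r 0), hreprf 1 (r 3)]
    by_cases h1 : r 1 = 0
    · by_cases h2 : r 2 = 0
      · rw [if_pos h1.symm, if_pos h2.symm]
        by_cases h0 : r 0 = 1
        · by_cases h3 : r 3 = 1
          · rw [h0, h3, if_pos rfl]; ring
          · rw [h0, if_pos rfl, if_neg (show ¬((1:Fin N) = r 3) from fun hh => h3 hh.symm)]; ring
        · by_cases h3 : r 3 = 1
          · rw [h3, if_pos rfl, if_neg (show ¬((1:Fin N) = r 0) from fun hh => h0 hh.symm)]; ring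
          · rw [hkey r h1 h2 h0 h3, if_neg (show ¬((1:Fin N) = r 0) from fun hh => h0 hh.symm),
              if_neg (show ¬((1:Fin N) = r 3) from fun hh => h3 hh.symm)]; ring
      · rw [if_neg (show ¬((0:Fin N) = r 2) from fun hh => h2 hh.symm)]; ring
    · rw [if_neg (show ¬((0:Fin N) = r 1) from fun hh => h1 hh.symm)]; ring
  have hbmain : (∀ r : Fin 4 → Fin N, r 1 = 0 → r 2 = 0 → ¬(r 0 = 1 ∧ r 3 = 1) →
        W (fun k => f (r k)) = 0) →
      ∀ x y : Fin N → ℝ, W ![x, f 0, f 0, y] =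
        eta (f 0) x * eta (f 0) y * W ![f 1, f 0, f 0, f 1] := by
    intro hkey x y
    rw [heta x, heta y, hexp4 x (f 0) (f 0) y, hexp4 (f 1) (f 0) (f 0) (f 1),
        Finset.mul_sum]
    apply Finset.sum_congr rfl
    intro r _
    rw [hreprf 0 (r 1), hreprf 0 (r 2), hreprf 1 (r 0), hreprf 1 (r 3)]
    by_cases h1 : r 1 = 0
    · by_cases h2 : r 2 = 0
      · rw [if_pos h1.symm, if_pos h2.symm]
        by_cases h0 : r 0 = 1
        · by_cases h3 : r 3 = 1
          · rw [h0, h3, if_pos rfl]; ring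
          · rw [hkey r h1 h2 (fun hh => h3 hh.2), if_neg (show ¬((1:Fin N) = r 3) from fun hh => h3 hh.symm)]; ring
        · rw [hkey r h1 h2 (fun hh => h0 hh.1), if_neg (show ¬((1:Fin N) = r 0) from fun hh => h0 hh.symm)]; ring
      · rw [if_neg (show ¬((0:Fin N) = r 2) from fun hh => h2 hh.symm)]; ring
    · rw [if_neg (show ¬((0:Fin N) = r 1) from fun hh => h1 hh.symm)]; ring
  have hcmain : (∀ r : Fin 4 → Fin N, r 2 = 0 → r 3 ≠ 1 → W (fun k => f (r k)) = 0) →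
      ∀ x y w : Fin N → ℝ, W ![x, y, f 0, w] = eta (f 0) w * W ![x, y, f 0, f 1] := by
    intro hkey x y w
    rw [heta w, hexp4 x y (f 0) w, hexp4 x y (f 0) (f 1), Finset.mul_sum]
    apply Finset.sum_congr rfl
    intro r _
    rw [hreprf 0 (r 2), hreprf 1 (r 3)]
    by_cases h2 : r 2 = 0
    · by_cases h3 : r 3 = 1
      · rw [h3, if_pos rfl, if_pos h2.symm]; ring
      · rw [hkey r h2 h3, if_neg (show ¬((1:Fin N) = r 3) from fun hh => h3 hh.symm)]; ring
    · rw [if_neg (show ¬((0:Fin N) = r 2) from fun hh => h2 hh.symm)]; ring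
  have hdmain : (∀ r : Fin 4 → Fin N, r 2 = 0 → W (fun k => f (r k)) = 0) →
      ∀ x y w : Fin N → ℝ, W ![x, y, f 0, w] = 0 := by
    intro hkey x y w
    rw [hexp4 x y (f 0) w]
    apply Finset.sum_eq_zero
    intro r _
    by_cases h2 : r 2 = 0
    · rw [hkey r h2, mul_zero]
    · rw [hreprf 0 (r 2), if_neg (show ¬((0:Fin N) = r 2) from fun hh => h2 hh.symm)]; ring
  refine ⟨?_, ?_, ?_, ?_⟩
  · intro h u x y v
    rw [hmain (keyA h) x y, hmain (keyA h) x v, hmain (keyA h) u y, hmain (keyA h) u v]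
    ring
  · intro h x y v
    rw [hbmain (keyB h) x y, hbmain (keyB h) x v]
    ring
  · intro h x y w v
    rw [hcmain (keyC h) x y w, hcmain (keyC h) x y v]
    ring
  · intro h x y w
    exact hdmain (keyD h) x y w
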